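/- For any two density matrices σ₀, σ₁ on a finite-dimensional complex Hilbert space, ‖σ₀ - σ₁‖_tr ≥ 2(1 - √(F(σ₀, σ₁))). -/

import Mathlib

set_option maxHeartbeats 1000000

open Matrix
open scoped ComplexOrder

open scoped Classical in
/-- Square root of a positive semidefinite matrix (0 if not PSD). -/
noncomputable def matSqrt {n : ℕ} (A : Matrix (Fin n) (Fin n) ℂ) : Matrix (Fin n) (Fin n) ℂ :=
  if h : A.PosSemidef then
    (h.1.eigenvectorUnitary : Matrix (Fin n) (Fin n) ℂ) *
      diagonal ((↑) ∘ Real.sqrt ∘ h.1.eigenvalues) *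
      (star h.1.eigenvectorUnitary : Matrix (Fin n) (Fin n) ℂ)
  else 0

/-- Fidelity F(ρ,σ) = (Tr √(√ρ σ √ρ))². -/
noncomputable def fidelity {n : ℕ} (ρ σ : Matrix (Fin n) (Fin n) ℂ) : ℝ :=
  ((matSqrt (matSqrt ρ * σ * matSqrt ρ)).trace.re) ^ 2

/-- Trace norm ‖A‖_tr = Tr √(Aᴴ A). -/
noncomputable def traceNorm {n : ℕ} (A : Matrix (Fin n) (Fin n) ℂ) : ℝ :=
  (matSqrt (Aᴴ * A)).trace.re

/-- A density matrix: positive semidefinite with unit trace. -/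
def IsDensityMatrix {n : ℕ} (ρ : Matrix (Fin n) (Fin n) ℂ) : Prop :=
  ρ.PosSemidef ∧ ρ.trace = 1

section helpers
variable {n : ℕ}
open scoped MatrixOrder

lemma matSqrt_eq_sqrt {A : Matrix (Fin n) (Fin n) ℂ} (h : A.PosSemidef) :
    matSqrt A = CFC.sqrt A := by
  rw [CFC.sqrt_eq_cfc, cfc_nnreal_eq_real _ A h.nonneg, h.1.cfc_eq, matSqrt, dif_pos h,
    IsHermitian.cfc, Unitary.conjStarAlgAut_apply]
  refine congrArg (fun d => _ * diagonal d * _) (funext fun i => ?_)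
  simp [Real.coe_toNNReal', max_eq_left (h.eigenvalues_nonneg i)]

lemma matSqrt_posSemidef {A : Matrix (Fin n) (Fin n) ℂ} (h : A.PosSemidef) :
    (matSqrt A).PosSemidef := by rw [matSqrt_eq_sqrt h]; exact (CFC.sqrt_nonneg A).posSemidef

lemma matSqrt_mul_self {A : Matrix (Fin n) (Fin n) ℂ} (h : A.PosSemidef) :
    matSqrt A * matSqrt A = A := by rw [matSqrt_eq_sqrt h]; exact CFC.sqrt_mul_sqrt_self A h.nonneg

lemma matSqrt_unique {A B : Matrix (Fin n) (Fin n) ℂ} (hB : B.PosSemidef)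
    (hA : A.PosSemidef) (h : A * A = B) : matSqrt B = A := by
  rw [matSqrt_eq_sqrt hB]
  exact CFC.sqrt_unique h hA.nonneg

lemma psd_diag_nonneg {A : Matrix (Fin n) (Fin n) ℂ} (h : A.PosSemidef) (i : Fin n) :
    0 ≤ (A i i).re := by
  have := h.dotProduct_mulVec_nonneg (Pi.single i 1)
  have h2 : dotProduct (star (Pi.single i 1)) (A *ᵥ Pi.single i 1) = A i i := by
    simp [dotProduct, mulVec, Pi.single_apply, Finset.sum_ite_eq, apply_ite]
  rw [h2] at this
  exact (Complex.le_def.mp this).1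

lemma psd_trace_re_nonneg {A : Matrix (Fin n) (Fin n) ℂ} (h : A.PosSemidef) :
    0 ≤ A.trace.re := by
  rw [Matrix.trace, Complex.re_sum]
  exact Finset.sum_nonneg fun i _ => psd_diag_nonneg h i

lemma trace_conj_unitary {U A : Matrix (Fin n) (Fin n) ℂ}
    (hU : U ∈ Matrix.unitaryGroup (Fin n) ℂ) :
    (star U * A * U).trace = A.trace := by
  rw [Matrix.trace_mul_cycle, (mem_unitaryGroup_iff.mp hU), Matrix.one_mul]

lemma conj_mul_conj {u P Q : Matrix (Fin n) (Fin n) ℂ} (hu : u * star u = 1) :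
    (star u * P * u) * (star u * Q * u) = star u * (P * Q) * u := by
  simp only [Matrix.mul_assoc]
  congr 2
  rw [← Matrix.mul_assoc u (star u), hu, Matrix.one_mul]


lemma abs_sub_psd {H : Matrix (Fin n) (Fin n) ℂ} (hH : H.IsHermitian) :
    (matSqrt (H * H) - H).PosSemidef := by
  classical
  set U : Matrix (Fin n) (Fin n) ℂ := (hH.eigenvectorUnitary : Matrix (Fin n) (Fin n) ℂ) with hU
  have hUU : U * star U = 1 := mem_unitaryGroup_iff.mp (hH.eigenvectorUnitary).2
  have hU'U : star U * U = 1 := mem_unitaryGroup_iff'.mp (hH.eigenvectorUnitary).2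
  set lam := hH.eigenvalues with hlam
  have hspec : H = U * diagonal (fun i => ((lam i : ℝ) : ℂ)) * star U := hH.spectral_theorem
  set A0 : Matrix (Fin n) (Fin n) ℂ := U * diagonal (fun i => ((|lam i| : ℝ) : ℂ)) * star U
    with hA0
  have hdiagpsd : (diagonal (fun i => ((|lam i| : ℝ) : ℂ))).PosSemidef := by
    refine Matrix.PosSemidef.diagonal fun i => ?_
    exact Complex.zero_le_real.mpr (abs_nonneg _)
  have hA0psd : A0.PosSemidef := by
    have := hdiagpsd.mul_mul_conjTranspose_same U
    rwa [← Matrix.star_eq_conjTranspose] at this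
  have hsq : A0 * A0 = H * H := by
    rw [hA0, hspec]
    have key : ∀ d e : Fin n → ℂ,
        (U * diagonal d * star U) * (U * diagonal e * star U)
          = U * diagonal (fun i => d i * e i) * star U := by
      intro d e
      simp only [Matrix.mul_assoc]
      rw [← Matrix.mul_assoc (star U) U, hU'U, Matrix.one_mul,
        ← Matrix.mul_assoc (diagonal d) (diagonal e), Matrix.diagonal_mul_diagonal]
    rw [key, key]
    exact congrArg (fun dd => U * diagonal dd * star U) (funext fun i => by
      rw [← Complex.ofReal_mul, ← Complex.ofReal_mul, abs_mul_abs_self])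
  have hHH : (H * H).PosSemidef := by
    have := Matrix.posSemidef_conjTranspose_mul_self H
    rwa [hH.eq] at this
  have hms : matSqrt (H * H) = A0 := matSqrt_unique hHH hA0psd hsq
  rw [hms, hA0, hspec]
  have : U * diagonal (fun i => ((|lam i| : ℝ) : ℂ)) * star U
        - U * diagonal (fun i => ((lam i : ℝ) : ℂ)) * star U
      = U * diagonal (fun i => ((|lam i| - lam i : ℝ) : ℂ)) * star U := by
    rw [← Matrix.sub_mul, ← Matrix.mul_sub, Matrix.diagonal_sub]
    exact congrArg (fun dd => U * diagonal dd * star U) (funext fun i => by push_cast; ring)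
  rw [this]
  have hd : (diagonal (fun i => ((|lam i| - lam i : ℝ) : ℂ))).PosSemidef := by
    refine Matrix.PosSemidef.diagonal fun i => ?_
    exact Complex.zero_le_real.mpr (by simp [abs_nonneg, le_abs_self, sub_nonneg])
  have := hd.mul_mul_conjTranspose_same U
  rwa [← Matrix.star_eq_conjTranspose] at this

lemma abs_add_psd {H : Matrix (Fin n) (Fin n) ℂ} (hH : H.IsHermitian) :
    (matSqrt (H * H) + H).PosSemidef := by
  have := abs_sub_psd hH.neg
  rwa [neg_mul_neg, sub_neg_eq_add] at this


end helpers

lemma stepA {n : ℕ} {σ₀ σ₁ : Matrix (Fin n) (Fin n) ℂ}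
    (h₀ : σ₀.PosSemidef) (h₁ : σ₁.PosSemidef) :
    ((matSqrt σ₁ * matSqrt σ₀).trace).re ≤ Real.sqrt (fidelity σ₀ σ₁) := by
  classical
  set A := matSqrt σ₀ with hAdef
  set B := matSqrt σ₁ with hBdef
  have hA := matSqrt_posSemidef h₀
  have hB := matSqrt_posSemidef h₁
  have hX : (A * σ₁ * A).PosSemidef := by
    have := h₁.conjTranspose_mul_mul_same A
    rwa [hA.1.eq] at this
  set S := matSqrt (A * σ₁ * A) with hSdef
  have hS : S.PosSemidef := matSqrt_posSemidef hX
  have hSS : S * S = A * σ₁ * A := matSqrt_mul_self hX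
  have htr : 0 ≤ S.trace.re := psd_trace_re_nonneg hS
  have hfid : Real.sqrt (fidelity σ₀ σ₁) = S.trace.re := by
    rw [fidelity]
    exact Real.sqrt_sq htr
  rw [hfid]
  -- diagonalize S
  set U : Matrix (Fin n) (Fin n) ℂ := (hS.1.eigenvectorUnitary : Matrix (Fin n) (Fin n) ℂ) with hU
  have hUU : U * star U = 1 := mem_unitaryGroup_iff.mp (hS.1.eigenvectorUnitary).2
  have hU'U : star U * U = 1 := mem_unitaryGroup_iff'.mp (hS.1.eigenvectorUnitary).2
  set s := hS.1.eigenvalues with hs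
  have hdiag : star U * S * U = diagonal (fun i => ((s i : ℝ) : ℂ)) :=
    by have := hS.1.conjStarAlgAut_star_eigenvectorUnitary
       rw [Unitary.conjStarAlgAut_star_apply] at this; exact this
  have hsnn : ∀ i, 0 ≤ s i := fun i => hS.eigenvalues_nonneg i
  set N := B * A with hN
  have hNN : Nᴴ * N = A * σ₁ * A := by
    rw [hN, Matrix.conjTranspose_mul, hA.1.eq, hB.1.eq, Matrix.mul_assoc,
      ← Matrix.mul_assoc B B A, matSqrt_mul_self h₁, ← Matrix.mul_assoc]
  set W := star U * N * U with hW
  have hWH : Wᴴ = star U * Nᴴ * U := by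
    rw [hW]
    simp [Matrix.conjTranspose_mul, Matrix.star_eq_conjTranspose, Matrix.mul_assoc]
  have hWW : Wᴴ * W = diagonal (fun i => ((s i * s i : ℝ) : ℂ)) := by
    rw [hWH, hW, conj_mul_conj hUU, hNN, ← hSS]
    have : star U * (S * S) * U = (star U * S * U) * (star U * S * U) :=
      (conj_mul_conj hUU).symm
    rw [this, hdiag, Matrix.diagonal_mul_diagonal]
    congr 1
    funext i
    push_cast
    ring
  -- entrywise bound
  have hentry : ∀ i, (W i i).re ≤ s i := by
    intro i
    have h1 : (Wᴴ * W) i i = ((s i * s i : ℝ) : ℂ) := by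
      rw [hWW, Matrix.diagonal_apply_eq]
    have h2 : (Wᴴ * W) i i = ∑ j, ((Complex.normSq (W j i) : ℝ) : ℂ) := by
      simp only [Matrix.mul_apply, Matrix.conjTranspose_apply]
      congr 1
      funext j
      rw [Complex.star_def, ← Complex.normSq_eq_conj_mul_self]
    have h3 : ∑ j, Complex.normSq (W j i) = s i * s i := by
      have := h1.symm.trans h2
      have := congrArg Complex.re this
      rw [Complex.re_sum] at this
      simpa using this.symm
    have h4 : Complex.normSq (W i i) ≤ s i * s i := by
      rw [← h3]
      exact Finset.single_le_sum (f := fun j => Complex.normSq (W j i)) (fun j _ => Complex.normSq_nonneg _) (Finset.mem_univ i)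
    calc (W i i).re ≤ ‖W i i‖ := Complex.re_le_norm _
      _ = Real.sqrt (Complex.normSq (W i i)) := Complex.norm_def _
      _ ≤ Real.sqrt (s i * s i) := Real.sqrt_le_sqrt h4
      _ = s i := Real.sqrt_mul_self (hsnn i)
  -- sum up
  have hNtr : N.trace = W.trace := (trace_conj_unitary (hS.1.eigenvectorUnitary).2).symm
  have hStr : S.trace = ∑ i, ((s i : ℝ) : ℂ) := by
    have := trace_conj_unitary (U := U) (A := S) (hS.1.eigenvectorUnitary).2
    rw [← this, hdiag, Matrix.trace_diagonal]
  rw [hNtr]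
  have : W.trace.re = ∑ i, (W i i).re := by rw [Matrix.trace, Complex.re_sum]; rfl
  rw [this]
  have : S.trace.re = ∑ i, s i := by rw [hStr, Complex.re_sum]; simp
  rw [this]
  exact Finset.sum_le_sum fun i _ => hentry i

lemma stepB {n : ℕ} {σ₀ σ₁ : Matrix (Fin n) (Fin n) ℂ}
    (h₀ : σ₀.PosSemidef) (h₁ : σ₁.PosSemidef)
    (t₀ : σ₀.trace = 1) (t₁ : σ₁.trace = 1) :
    2 - 2 * ((matSqrt σ₁ * matSqrt σ₀).trace).re ≤ traceNorm (σ₀ - σ₁) := by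
  classical
  set A := matSqrt σ₀ with hAdef
  set B := matSqrt σ₁ with hBdef
  have hA := matSqrt_posSemidef h₀
  have hB := matSqrt_posSemidef h₁
  set Δ := σ₀ - σ₁ with hΔdef
  have hΔh : Δ.IsHermitian := h₀.1.sub h₁.1
  set C := A - B with hCdef
  have hCh : C.IsHermitian := hA.1.sub hB.1
  -- diagonalize C
  set U : Matrix (Fin n) (Fin n) ℂ := (hCh.eigenvectorUnitary : Matrix (Fin n) (Fin n) ℂ) with hU
  have hUU : U * star U = 1 := mem_unitaryGroup_iff.mp (hCh.eigenvectorUnitary).2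
  set lam := hCh.eigenvalues with hlam
  have hdiag : star U * C * U = diagonal (fun i => ((lam i : ℝ) : ℂ)) :=
    by have := hCh.conjStarAlgAut_star_eigenvectorUnitary
       rw [Unitary.conjStarAlgAut_star_apply] at this; exact this
  set G := star U * (A + B) * U with hG
  have hABpsd : (A + B).PosSemidef := hA.add hB
  -- G - D and G + D psd
  have hconj_psd : ∀ {M : Matrix (Fin n) (Fin n) ℂ}, M.PosSemidef →
      (star U * M * U).PosSemidef := by
    intro M hM
    have := hM.conjTranspose_mul_mul_same U
    rwa [← Matrix.star_eq_conjTranspose] at this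
  have hGD : (G - diagonal (fun i => ((lam i : ℝ) : ℂ))).PosSemidef := by
    rw [← hdiag, hG, ← Matrix.sub_mul, ← Matrix.mul_sub]
    have : A + B - C = B + B := by rw [hCdef]; abel
    rw [this]
    exact hconj_psd (hB.add hB)
  have hGpD : (G + diagonal (fun i => ((lam i : ℝ) : ℂ))).PosSemidef := by
    rw [← hdiag, hG, ← Matrix.add_mul, ← Matrix.mul_add]
    have : A + B + C = A + A := by rw [hCdef]; abel
    rw [this]
    exact hconj_psd (hA.add hA)
  have hGlam : ∀ i, |lam i| ≤ (G i i).re := by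
    intro i
    have h1 := psd_diag_nonneg hGD i
    have h2 := psd_diag_nonneg hGpD i
    rw [Matrix.sub_apply, Complex.sub_re, Matrix.diagonal_apply_eq] at h1
    rw [Matrix.add_apply, Complex.add_re, Matrix.diagonal_apply_eq] at h2
    simp only [Complex.ofReal_re] at h1 h2
    rw [abs_le]; constructor <;> linarith
  -- E = star U * Δ * U, E i i = lam i * G i i
  set E := star U * Δ * U with hE
  have hsum : C * (A + B) + (A + B) * C = Δ + Δ := by
    have expand : (A - B) * (A + B) + (A + B) * (A - B)
        = A * A + A * A - (B * B + B * B) := by noncomm_ring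
    rw [hCdef, expand, matSqrt_mul_self h₀, matSqrt_mul_self h₁, hΔdef]
    abel
  have hEE : E + E = diagonal (fun i => ((lam i : ℝ) : ℂ)) * G
      + G * diagonal (fun i => ((lam i : ℝ) : ℂ)) := by
    calc E + E = star U * (Δ + Δ) * U := by rw [hE, Matrix.mul_add, Matrix.add_mul]
      _ = star U * (C * (A + B) + (A + B) * C) * U := by rw [hsum]
      _ = star U * (C * (A + B)) * U + star U * ((A + B) * C) * U := by
          rw [Matrix.mul_add, Matrix.add_mul]
      _ = (star U * C * U) * (star U * (A + B) * U)
            + (star U * (A + B) * U) * (star U * C * U) := by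
          rw [conj_mul_conj hUU, conj_mul_conj hUU]
      _ = _ := by rw [hdiag, hG]
  have hEdiag : ∀ i, (E i i).re = lam i * (G i i).re := by
    intro i
    have := congrFun (congrFun hEE i) i
    have h2 : E i i + E i i = (lam i : ℂ) * G i i + G i i * (lam i : ℂ) := by
      simpa [Matrix.add_apply, Matrix.diagonal_mul, Matrix.mul_diagonal] using this
    have h3 : E i i = (lam i : ℂ) * G i i := by
      have : (2 : ℂ) * E i i = (2 : ℂ) * ((lam i : ℂ) * G i i) := by
        rw [two_mul, two_mul, h2]; ring
      exact mul_left_cancel₀ two_ne_zero this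
    rw [h3, Complex.re_ofReal_mul]
  -- T = |Δ|
  have hΔΔ : Δᴴ * Δ = Δ * Δ := by rw [hΔh.eq]
  set T := matSqrt (Δ * Δ) with hT
  have hTsub : (T - Δ).PosSemidef := abs_sub_psd hΔh
  have hTadd : (T + Δ).PosSemidef := abs_add_psd hΔh
  set F := star U * T * U with hF
  have hFEs : (F - E).PosSemidef := by
    rw [hF, hE, ← Matrix.sub_mul, ← Matrix.mul_sub]
    exact hconj_psd hTsub
  have hFEa : (F + E).PosSemidef := by
    rw [hF, hE, ← Matrix.add_mul, ← Matrix.mul_add]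
    exact hconj_psd hTadd
  have hEbound : ∀ i, |(E i i).re| ≤ (F i i).re := by
    intro i
    have h1 := psd_diag_nonneg hFEs i
    have h2 := psd_diag_nonneg hFEa i
    rw [Matrix.sub_apply, Complex.sub_re] at h1
    rw [Matrix.add_apply, Complex.add_re] at h2
    rw [abs_le]; constructor <;> linarith
  have hkey : ∀ i, lam i ^ 2 ≤ (F i i).re := by
    intro i
    have : lam i ^ 2 ≤ |(E i i).re| := by
      rw [hEdiag i, abs_mul]
      have h1 := hGlam i
      have h2 : |(G i i).re| = (G i i).re := abs_of_nonneg (by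
        have := abs_nonneg (lam i); linarith)
      rw [h2]
      nlinarith [abs_nonneg (lam i), sq_abs (lam i)]
    linarith [hEbound i]
  -- trace computations
  have hFtr : F.trace = T.trace := trace_conj_unitary (hCh.eigenvectorUnitary).2
  have htn : traceNorm Δ = T.trace.re := by rw [traceNorm, hΔΔ]
  -- sum of lam^2 = trace (C*C)
  have hCC : (C * C).trace = ∑ i, ((lam i * lam i : ℝ) : ℂ) := by
    have h1 : (C * C).trace = (star U * (C * C) * U).trace :=
      (trace_conj_unitary (hCh.eigenvectorUnitary).2).symm
    rw [h1, ← conj_mul_conj hUU, hdiag, Matrix.diagonal_mul_diagonal, Matrix.trace_diagonal]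
    congr 1
    funext i
    push_cast
    ring
  -- trace (C*C) = 2 - 2 Re tr (B*A)
  have hCC2 : (C * C).trace = 2 - ((B * A).trace + (B * A).trace) := by
    have expand : (A - B) * (A - B) = A * A + B * B - (A * B + B * A) := by noncomm_ring
    rw [hCdef, expand, Matrix.trace_sub, Matrix.trace_add, Matrix.trace_add,
      matSqrt_mul_self h₀, matSqrt_mul_self h₁, t₀, t₁, Matrix.trace_mul_comm A B]
    ring
  have hlhs : 2 - 2 * ((B * A).trace).re = ∑ i, lam i ^ 2 := by
    have := congrArg Complex.re (hCC.symm.trans hCC2)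
    rw [Complex.re_sum] at this
    simp only [Complex.sub_re, Complex.add_re, Complex.ofReal_re] at this
    have h2 : (2 : ℂ).re = 2 := by norm_num
    rw [h2] at this
    have : 2 - 2 * ((B * A).trace).re = ∑ i, lam i * lam i := by linarith
    rw [this]
    congr 1
    funext i
    ring
  rw [hlhs, htn, ← hFtr]
  have : F.trace.re = ∑ i, (F i i).re := by rw [Matrix.trace, Complex.re_sum]; rfl
  rw [this]
  exact Finset.sum_le_sum fun i _ => hkey i

theorem fuchs_van_de_graaf {n : ℕ} (σ₀ σ₁ : Matrix (Fin n) (Fin n) ℂ)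
    (h₀ : IsDensityMatrix σ₀) (h₁ : IsDensityMatrix σ₁) :
    traceNorm (σ₀ - σ₁) ≥ 2 * (1 - Real.sqrt (fidelity σ₀ σ₁)) := by
  have a := stepA h₀.1 h₁.1
  have b := stepB h₀.1 h₁.1 h₀.2 h₁.2
  linarith
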